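/- (Reformulated Π theorem.) Let Q be a quantity space over the scalar system ℝ>0, and let d, d₁, …, d_m, b₁, …, b_r ∈ Q be such that b₁, …, b_r are independent (λ • ∏ⱼ bⱼ^{kⱼ} = 1_Q with λ ∈ ℝ>0 and integers kⱼ implies all kⱼ = 0) and for each i there exist integers cᵢ > 0 and c_{i1}, …, c_{ir} with dᵢ^{cᵢ} ~ ∏ⱼ bⱼ^{c_{ij}} (so that {[b₁], …, [b_r]} is a maximal independent set in the dimension group generated by the [dᵢ] and [bⱼ]). Let Ψ be a quantity function assigning to each tuple (p₁, …, p_m, q₁, …, q_r) with pᵢ ~ dᵢ and qⱼ ~ bⱼ a quantity Ψ(p, q) ~ d, and suppose Ψ has a covariant scalar representation. Then there exist integers k > 0 and k₁, …, k_r with d^k ~ ∏ⱼ bⱼ^{kⱼ}, integers cᵢ > 0 and c_{ij} with dᵢ^{cᵢ} ~ ∏ⱼ bⱼ^{c_{ij}} for each i, and a function Φ taking m-tuples of quantities equidimensional with 1_Q to a quantity equidimensional with 1_Q, such that for all admissible inputs, Ψ(p, q)^k = (∏ⱼ qⱼ^{kⱼ}) · Φ(Π₁, …, Π_m), where Πᵢ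 = pᵢ^{cᵢ} · (∏ⱼ qⱼ^{c_{ij}})⁻¹. -/

import Mathlib

/-- A *scalable (commutative) monoid* over a scalar system `K ⊆ F`:
`K` is a subset of the field `F` closed under addition, containing `1`,
closed under multiplication and under inverses of nonzero elements
(so the nonzero elements of `K` form a group under multiplication),
together with a scalar multiplication `smul` satisfying the axioms
`1 • q = q`, `α • (β • q) = (α β) • q` and `α • (q * q') = (α • q) * q'`
for scalars in `K`. -/
structure ScalableMonoid (F : Type*) [Field F] (Q : Type*) [CommMonoid Q] where
  K : Set F
  one_mem : (1 : F) ∈ K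
  add_mem : ∀ {a b : F}, a ∈ K → b ∈ K → a + b ∈ K
  mul_mem : ∀ {a b : F}, a ∈ K → b ∈ K → a * b ∈ K
  inv_mem : ∀ {a : F}, a ∈ K → a ≠ 0 → a⁻¹ ∈ K
  smul : F → Q → Q
  smul_one : ∀ q : Q, smul 1 q = q
  smul_smul : ∀ {a b : F}, a ∈ K → b ∈ K → ∀ q : Q, smul a (smul b q) = smul (a * b) q
  smul_mul : ∀ {a : F}, a ∈ K → ∀ q q' : Q, smul a (q * q') = smul a q * q'

/-- `b : Fin n → Qˣ` (a list of invertible quantities) is a basis for the scalable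
monoid `M` if every quantity has a unique expansion `q = μ • ∏ i, b i ^ k i`
with `μ ∈ K` and integer exponents `k`. -/
def ScalableMonoid.IsBasis {F : Type*} [Field F] {Q : Type*} [CommMonoid Q]
    (M : ScalableMonoid F Q) {n : ℕ} (b : Fin n → Qˣ) : Prop :=
  ∀ q : Q, ∃! p : M.K × (Fin n → ℤ),
    q = M.smul (p.1 : F) (↑(∏ i, b i ^ p.2 i) : Q)

/-- A quantity space is a scalable monoid having a (finite) basis. -/
def ScalableMonoid.IsQuantitySpace {F : Type*} [Field F] {Q : Type*} [CommMonoid Q]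
    (M : ScalableMonoid F Q) : Prop :=
  ∃ (n : ℕ) (b : Fin n → Qˣ), M.IsBasis b

/-- The measure `μ_B(q)`: the unique scalar in the expansion of `q` relative to
the basis `B`. -/
noncomputable def ScalableMonoid.measure {F : Type*} [Field F] {Q : Type*} [CommMonoid Q]
    (M : ScalableMonoid F Q) {n : ℕ} {b : Fin n → Qˣ} (hB : M.IsBasis b) (q : Q) : F :=
  ((hB q).choose.1 : F)

/-- Quantities `q, q'` are equidimensional (`q ~ q'`) if `α • q = β • q'`
for some scalars `α, β ∈ K`. -/
def ScalableMonoid.Equidim {F : Type*} [Field F] {Q : Type*} [CommMonoid Q]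
    (M : ScalableMonoid F Q) (q q' : Q) : Prop :=
  ∃ α β : F, α ∈ M.K ∧ β ∈ M.K ∧ M.smul α q = M.smul β q'

namespace PiAux

variable {Q : Type*} [CommMonoid Q] (M : ScalableMonoid ℝ Q) (hK : M.K = {x : ℝ | 0 < x})

section basic
variable {M}
include hK

lemma mem_of_pos {a : ℝ} (ha : 0 < a) : a ∈ M.K := by rw [hK]; exact ha
lemma pos_of_mem {a : ℝ} (ha : a ∈ M.K) : 0 < a := by rw [hK] at ha; exact ha

lemma smul_smul' {a b : ℝ} (ha : 0 < a) (hb : 0 < b) (q : Q) :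
    M.smul a (M.smul b q) = M.smul (a * b) q :=
  M.smul_smul (mem_of_pos hK ha) (mem_of_pos hK hb) q

lemma smul_cancel {a : ℝ} (ha : 0 < a) (q : Q) :
    M.smul a⁻¹ (M.smul a q) = q := by
  rw [smul_smul' hK (by positivity) ha, inv_mul_cancel₀ ha.ne', M.smul_one]

lemma smul_left_injective {a : ℝ} (ha : 0 < a) {q q' : Q}
    (h : M.smul a q = M.smul a q') : q = q' := by
  have := congrArg (M.smul a⁻¹) h
  rwa [smul_cancel hK ha, smul_cancel hK ha] at this

end basic

section meas

variable {M} {n : ℕ} {bB : Fin n → Qˣ} (hB : M.IsBasis bB)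

/-- exponent vector of `q` relative to the basis. -/
noncomputable def expv (q : Q) : Fin n → ℤ := (hB q).choose.2

lemma expand (q : Q) :
    q = M.smul (M.measure hB q) (↑(∏ i, bB i ^ expv hB q i) : Q) :=
  (hB q).choose_spec.1

lemma measure_mem (q : Q) : M.measure hB q ∈ M.K := (hB q).choose.1.2

lemma eq_measure_expv {q : Q} {a : ℝ} (ha : a ∈ M.K) {kv : Fin n → ℤ}
    (h : q = M.smul a (↑(∏ i, bB i ^ kv i) : Q)) :
    a = M.measure hB q ∧ kv = expv hB q := by
  have := (hB q).choose_spec.2 (⟨a, ha⟩, kv) h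
  constructor
  · exact congrArg (fun p => (p.1 : ℝ)) this
  · exact congrArg Prod.snd this

lemma eq_of_measure_expv {q q' : Q} (h1 : M.measure hB q = M.measure hB q')
    (h2 : expv hB q = expv hB q') : q = q' := by
  rw [expand hB q, expand hB q', h1, h2]

end meas

end PiAux

namespace Sec2
variable {Q : Type*} [CommMonoid Q] {M : ScalableMonoid ℝ Q}
variable (hK : M.K = {x : ℝ | 0 < x}) {n : ℕ} {bB : Fin n → Qˣ} (hB : M.IsBasis bB)
include hK

open PiAux

lemma smul_mul_smul {a b : ℝ} (ha : 0 < a) (hb : 0 < b) (q q' : Q) :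
    M.smul a q * M.smul b q' = M.smul (a * b) (q * q') := by
  rw [mul_comm (M.smul a q), ← M.smul_mul (mem_of_pos hK hb), mul_comm q' (M.smul a q),
    ← M.smul_mul (mem_of_pos hK ha), smul_smul' hK hb ha, mul_comm b a]


lemma measure_pos (q : Q) : 0 < M.measure hB q := pos_of_mem hK (measure_mem hB q)

lemma measure_mul (q q' : Q) : M.measure hB (q * q') = M.measure hB q * M.measure hB q' := by
  have h : q * q' = M.smul (M.measure hB q * M.measure hB q')
      (↑(∏ i, bB i ^ (expv hB q i + expv hB q' i)) : Q) := by
    have : ((∏ i, bB i ^ (expv hB q i + expv hB q' i) : Qˣ) : Q)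
        = ((∏ i, bB i ^ expv hB q i : Qˣ) : Q) * ((∏ i, bB i ^ expv hB q' i : Qˣ) : Q) := by
      rw [← Units.val_mul, ← Finset.prod_mul_distrib]
      norm_num [zpow_add]
    rw [this, ← smul_mul_smul hK (measure_pos hK hB q) (measure_pos hK hB q'),
      ← expand hB q, ← expand hB q']
  exact (eq_measure_expv hB (M.mul_mem (measure_mem hB q) (measure_mem hB q')) h).1.symm

lemma expv_mul (q q' : Q) : expv hB (q * q') = expv hB q + expv hB q' := by
  have h : q * q' = M.smul (M.measure hB q * M.measure hB q')
      (↑(∏ i, bB i ^ (expv hB q i + expv hB q' i)) : Q) := by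
    have : ((∏ i, bB i ^ (expv hB q i + expv hB q' i) : Qˣ) : Q)
        = ((∏ i, bB i ^ expv hB q i : Qˣ) : Q) * ((∏ i, bB i ^ expv hB q' i : Qˣ) : Q) := by
      rw [← Units.val_mul, ← Finset.prod_mul_distrib]
      norm_num [zpow_add]
    rw [this, ← smul_mul_smul hK (measure_pos hK hB q) (measure_pos hK hB q'),
      ← expand hB q, ← expand hB q']
  exact ((eq_measure_expv hB (M.mul_mem (measure_mem hB q) (measure_mem hB q')) h).2).symm

lemma measure_one : M.measure hB (1 : Q) = 1 := by
  have h : (1 : Q) = M.smul 1 (↑(∏ i, bB i ^ (fun _ => (0:ℤ)) i) : Q) := by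
    simp [M.smul_one]
  exact ((eq_measure_expv hB M.one_mem h).1).symm

lemma expv_one : expv hB (1 : Q) = 0 := by
  have h : (1 : Q) = M.smul 1 (↑(∏ i, bB i ^ (fun _ => (0:ℤ)) i) : Q) := by
    simp [M.smul_one]
  exact ((eq_measure_expv hB M.one_mem h).2).symm

/-- measure as a monoid hom on units, valued in `ℝˣ`. -/
noncomputable def measHom : Qˣ →* ℝˣ where
  toFun u := Units.mk0 (M.measure hB (u : Q)) (measure_pos hK hB _).ne'
  map_one' := by ext; simpa using measure_one hK hB
  map_mul' u v := by ext; simpa using measure_mul hK hB (u : Q) (v : Q)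

/-- expv as a monoid hom on units. -/
noncomputable def expHom : Qˣ →* Multiplicative (Fin n → ℤ) where
  toFun u := Multiplicative.ofAdd (expv hB (u : Q))
  map_one' := by simpa using congrArg Multiplicative.ofAdd (expv_one hK hB)
  map_mul' u v := by simpa using congrArg Multiplicative.ofAdd (expv_mul hK hB (u : Q) (v : Q))

lemma measure_unit_zpow (u : Qˣ) (z : ℤ) :
    M.measure hB ↑(u ^ z) = M.measure hB (u : Q) ^ z := by
  have := map_zpow (measHom hK hB) u z
  have h2 := congrArg (Units.val) this
  rw [Units.val_zpow_eq_zpow_val] at h2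
  simpa [measHom] using h2

lemma expv_unit_zpow (u : Qˣ) (z : ℤ) :
    expv hB ↑(u ^ z) = z • expv hB (u : Q) := by
  have := map_zpow (expHom hK hB) u z
  have h2 := congrArg (Multiplicative.toAdd) this
  simpa [expHom] using h2

lemma measure_unit_prod {r : ℕ} (f : Fin r → Qˣ) (z : Fin r → ℤ) :
    M.measure hB (↑(∏ j, f j ^ z j) : Q) = ∏ j, M.measure hB (f j : Q) ^ z j :=
  calc M.measure hB (↑(∏ j, f j ^ z j) : Q)
      = ((measHom hK hB) (∏ j, f j ^ z j) : ℝ) := rfl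
    _ = ((∏ j, measHom hK hB (f j ^ z j) : ℝˣ) : ℝ) := by rw [map_prod]
    _ = ∏ j, ((measHom hK hB (f j ^ z j) : ℝˣ) : ℝ) := map_prod (Units.coeHom ℝ) _ _
    _ = ∏ j, M.measure hB (↑(f j ^ z j) : Q) := rfl
    _ = ∏ j, M.measure hB (f j : Q) ^ z j :=
        Finset.prod_congr rfl fun j _ => measure_unit_zpow hK hB (f j) (z j)

lemma expv_unit_prod {r : ℕ} (f : Fin r → Qˣ) (z : Fin r → ℤ) :
    expv hB (↑(∏ j, f j ^ z j) : Q) = ∑ j, z j • expv hB (f j : Q) := by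
  have := map_prod (expHom hK hB) (fun j => f j ^ z j) Finset.univ
  have h2 := congrArg (Multiplicative.toAdd) this
  simp only [expHom, MonoidHom.coe_mk, OneHom.coe_mk, toAdd_prod, toAdd_ofAdd] at h2
  rw [h2]
  exact Finset.sum_congr rfl fun j _ => by
    have := expv_unit_zpow hK hB (f j) (z j); simpa using this

end Sec2

namespace Sec3
open PiAux Sec2
variable {Q : Type*} [CommMonoid Q] {M : ScalableMonoid ℝ Q}
variable (hK : M.K = {x : ℝ | 0 < x}) {n : ℕ} {bB : Fin n → Qˣ} (hB : M.IsBasis bB)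
include hK

lemma measure_smul {a : ℝ} (ha : 0 < a) (q : Q) :
    M.measure hB (M.smul a q) = a * M.measure hB q := by
  have h : M.smul a q = M.smul (a * M.measure hB q) (↑(∏ i, bB i ^ expv hB q i) : Q) := by
    rw [← smul_smul' hK ha (measure_pos hK hB q), ← expand hB q]
  exact ((eq_measure_expv hB (mem_of_pos hK (mul_pos ha (measure_pos hK hB q))) h).1).symm

lemma expv_smul {a : ℝ} (ha : 0 < a) (q : Q) :
    expv hB (M.smul a q) = expv hB q := by
  have h : M.smul a q = M.smul (a * M.measure hB q) (↑(∏ i, bB i ^ expv hB q i) : Q) := by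
    rw [← smul_smul' hK ha (measure_pos hK hB q), ← expand hB q]
  have := mul_pos ha (measure_pos hK hB q)
  exact ((eq_measure_expv hB (mem_of_pos hK this) h).2).symm

lemma equidim_iff (q q' : Q) : M.Equidim q q' ↔ expv hB q = expv hB q' := by
  constructor
  · rintro ⟨α, β, hα, hβ, h⟩
    have := congrArg (expv hB) h
    rwa [expv_smul hK hB (pos_of_mem hK hα), expv_smul hK hB (pos_of_mem hK hβ)] at this
  · intro h
    refine ⟨M.measure hB q', M.measure hB q, measure_mem hB q', measure_mem hB q, ?_⟩
    conv_lhs => rw [expand hB q]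
    conv_rhs => rw [expand hB q']
    rw [smul_smul' hK (measure_pos hK hB q') (measure_pos hK hB q),
      smul_smul' hK (measure_pos hK hB q) (measure_pos hK hB q'), mul_comm, h]

lemma measure_unit_inv (u : Qˣ) : M.measure hB (↑u⁻¹ : Q) = (M.measure hB (u : Q))⁻¹ := by
  have := map_inv (measHom hK hB) u
  have h2 := congrArg Units.val this
  rw [Units.val_inv_eq_inv_val] at h2
  exact h2

lemma expv_unit_inv (u : Qˣ) : expv hB (↑u⁻¹ : Q) = - expv hB (u : Q) := by
  have := map_inv (expHom hK hB) u
  have h2 := congrArg Multiplicative.toAdd this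
  simpa [expHom] using h2

lemma expv_pow (q : Q) (k : ℕ) : expv hB (q ^ k) = k • expv hB q := by
  induction k with
  | zero => simpa using expv_one hK hB
  | succ k ih => rw [pow_succ, expv_mul hK hB, ih, add_smul, one_smul]

lemma measure_pow (q : Q) (k : ℕ) : M.measure hB (q ^ k) = M.measure hB q ^ k := by
  induction k with
  | zero => simpa using measure_one hK hB
  | succ k ih => rw [pow_succ, measure_mul hK hB, ih, pow_succ]

/-- the rescaled unit `α • u`. -/
noncomputable def sUnit {a : ℝ} (ha : 0 < a) (u : Qˣ) : Qˣ where
  val := M.smul a ↑u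
  inv := M.smul a⁻¹ ↑u⁻¹
  val_inv := by
    rw [smul_mul_smul hK ha (by positivity), mul_inv_cancel₀ ha.ne', Units.mul_inv, M.smul_one]
  inv_val := by
    rw [smul_mul_smul hK (by positivity) ha, inv_mul_cancel₀ ha.ne', Units.inv_mul, M.smul_one]

lemma sUnit_zpow {a : ℝ} (ha : 0 < a) (u : Qˣ) (z : ℤ) :
    ((sUnit hK ha u ^ z : Qˣ) : Q) = M.smul (a ^ z) ↑(u ^ z) := by
  induction z using Int.induction_on with
  | zero => simp [M.smul_one]
  | succ k ih =>
      rw [zpow_add_one, zpow_add_one, Units.val_mul, ih]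
      show _ * M.smul a ↑u = _
      rw [smul_mul_smul hK (by positivity) ha, ← Units.val_mul, ← zpow_add_one,
        ← zpow_add_one₀ ha.ne']
  | pred k ih =>
      rw [zpow_sub_one, zpow_sub_one, Units.val_mul, ih]
      show _ * M.smul a⁻¹ ↑u⁻¹ = _
      rw [smul_mul_smul hK (by positivity) (by positivity), ← Units.val_mul, ← zpow_sub_one,
        ← zpow_sub_one₀ ha.ne']

lemma sUnit_prod_aux {ι : Type*} [DecidableEq ι] (s : Finset ι) (a : ι → ℝ)
    (ha : ∀ j, 0 < a j) (u : ι → Qˣ) (k : ι → ℤ) :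
    ((∏ j ∈ s, sUnit hK (ha j) (u j) ^ k j : Qˣ) : Q)
      = M.smul (∏ j ∈ s, a j ^ k j) ↑(∏ j ∈ s, u j ^ k j) := by
  induction s using Finset.induction_on with
  | empty => simp [M.smul_one]
  | insert _ _ hns ih =>
      rw [Finset.prod_insert hns, Finset.prod_insert hns, Finset.prod_insert hns,
        Units.val_mul, ih, sUnit_zpow hK,
        smul_mul_smul hK (zpow_pos (ha _) _) (Finset.prod_pos fun j _ => zpow_pos (ha j) _),
        Units.val_mul]

lemma sUnit_prod {r : ℕ} (a : Fin r → ℝ) (ha : ∀ j, 0 < a j) (u : Fin r → Qˣ)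
    (k : Fin r → ℤ) :
    ((∏ j, sUnit hK (ha j) (u j) ^ k j : Qˣ) : Q)
      = M.smul (∏ j, a j ^ k j) ↑(∏ j, u j ^ k j) :=
  sUnit_prod_aux hK Finset.univ a ha u k

/-- the rescaled basis -/
noncomputable def rbasis (a : Fin n → ℝ) (ha : ∀ l, 0 < a l) : Fin n → Qˣ :=
  fun l => sUnit hK (ha l) (bB l)

include hB in
lemma rbasis_isBasis (a : Fin n → ℝ) (ha : ∀ l, 0 < a l) :
    M.IsBasis (rbasis hK a ha (bB := bB)) := by
  intro q
  have hprod : ∀ kv : Fin n → ℤ, (0:ℝ) < ∏ l, a l ^ kv l :=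
    fun kv => Finset.prod_pos fun l _ => zpow_pos (ha l) _
  refine ⟨(⟨M.measure hB q * (∏ l, a l ^ expv hB q l)⁻¹,
      mem_of_pos hK (mul_pos (measure_pos hK hB q) (inv_pos.2 (hprod _)))⟩, expv hB q), ?_, ?_⟩
  · show q = M.smul _ _
    simp only [rbasis]
    rw [sUnit_prod hK, smul_smul' hK (mul_pos (measure_pos hK hB q)
      (inv_pos.2 (hprod _))) (hprod _), mul_assoc, inv_mul_cancel₀ (hprod _).ne', mul_one]
    exact expand hB q
  · rintro ⟨⟨β, hβ⟩, kv⟩ h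
    simp only at h
    simp only [rbasis] at h
    rw [sUnit_prod hK, smul_smul' hK (pos_of_mem hK hβ) (hprod kv)] at h
    obtain ⟨h1, h2⟩ := eq_measure_expv hB (M.mul_mem hβ (mem_of_pos hK (hprod kv))) h
    refine Prod.ext (Subtype.ext ?_) h2
    show β = M.measure hB q * (∏ l, a l ^ expv hB q l)⁻¹
    rw [← h1, h2, mul_assoc, mul_inv_cancel₀ (hprod _).ne', mul_one]

include hB in
lemma rbasis_measure (a : Fin n → ℝ) (ha : ∀ l, 0 < a l) (q : Q) :
    M.measure (rbasis_isBasis hK hB a ha) q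
      = M.measure hB q * (∏ l, a l ^ expv hB q l)⁻¹ := by
  have hprod : (0:ℝ) < ∏ l, a l ^ expv hB q l :=
    Finset.prod_pos fun l _ => zpow_pos (ha l) _
  have h : q = M.smul (M.measure hB q * (∏ l, a l ^ expv hB q l)⁻¹)
      (↑(∏ l, rbasis hK a ha (bB := bB) l ^ expv hB q l) : Q) := by
    simp only [rbasis]
    rw [sUnit_prod hK, smul_smul' hK (mul_pos (measure_pos hK hB q)
      (inv_pos.2 hprod)) hprod, mul_assoc, inv_mul_cancel₀ hprod.ne', mul_one]
    exact expand hB q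
  exact ((eq_measure_expv (rbasis_isBasis hK hB a ha)
    (mem_of_pos hK (mul_pos (measure_pos hK hB q) (inv_pos.2 hprod))) h).1).symm

end Sec3

namespace Sec4
open PiAux Sec2 Sec3

noncomputable def pt (x : ℝ) : ℝ := if 0 < x then x else 1
lemma pt_pos (x : ℝ) : 0 < pt x := by unfold pt; split <;> simp_all
lemma pt_eq {x : ℝ} (h : 0 < x) : pt x = x := if_pos h

variable {Q : Type*} [CommMonoid Q] {M : ScalableMonoid ℝ Q}
variable (hK : M.K = {x : ℝ | 0 < x}) {n : ℕ} {bB : Fin n → Qˣ} (hB : M.IsBasis bB)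
variable {m r : ℕ} (dd : Fin m → Q) (b : Fin r → Qˣ)

/-- dot product of an integer vector with a real vector -/
def zdot (v : Fin n → ℤ) (t : Fin n → ℝ) : ℝ := ∑ l, (v l : ℝ) * t l

lemma exp_zdot (v : Fin n → ℤ) (t : Fin n → ℝ) :
    ∏ l, Real.exp (t l) ^ v l = Real.exp (zdot v t) := by
  rw [zdot, Real.exp_sum]
  refine Finset.prod_congr rfl fun l _ => ?_
  rw [← Real.rpow_intCast (Real.exp (t l)) (v l), Real.rpow_def_of_pos (Real.exp_pos _),
    Real.log_exp, mul_comm]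

include hK in
lemma basis_prod_spec (k : Fin n → ℤ) :
    M.measure hB (↑(∏ l, bB l ^ k l) : Q) = 1 ∧ expv hB (↑(∏ l, bB l ^ k l) : Q) = k := by
  have h : (↑(∏ l, bB l ^ k l) : Q) = M.smul 1 (↑(∏ l, bB l ^ k l) : Q) := (M.smul_one _).symm
  obtain ⟨h1, h2⟩ := eq_measure_expv hB M.one_mem h
  exact ⟨h1.symm, h2.symm⟩

noncomputable def pfun (x : Fin m → ℝ) : Fin m → Q :=
  fun i => M.smul (pt (x i)) (↑(∏ l, bB l ^ expv hB (dd i) l) : Q)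

noncomputable def qfun (y : Fin r → ℝ) : Fin r → Qˣ :=
  fun j => sUnit hK (pt_pos (y j)) (∏ l, bB l ^ expv hB ((b j : Q)) l)

include hK

lemma pfun_measure (x : Fin m → ℝ) (i : Fin m) :
    M.measure hB (pfun hB dd x i) = pt (x i) := by
  rw [pfun, measure_smul hK hB (pt_pos _), (basis_prod_spec hK hB _).1, mul_one]

lemma pfun_expv (x : Fin m → ℝ) (i : Fin m) :
    expv hB (pfun hB dd x i) = expv hB (dd i) := by
  rw [pfun, expv_smul hK hB (pt_pos _), (basis_prod_spec hK hB _).2]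

lemma pfun_equidim (x : Fin m → ℝ) (i : Fin m) :
    M.Equidim (pfun hB dd x i) (dd i) := by
  rw [equidim_iff hK hB]; exact pfun_expv hK hB dd x i

lemma qfun_val (y : Fin r → ℝ) (j : Fin r) :
    ((qfun hK hB b y j : Qˣ) : Q) = M.smul (pt (y j)) (↑(∏ l, bB l ^ expv hB ((b j : Q)) l) : Q) :=
  rfl

lemma qfun_measure (y : Fin r → ℝ) (j : Fin r) :
    M.measure hB ((qfun hK hB b y j : Qˣ) : Q) = pt (y j) := by
  rw [qfun_val, measure_smul hK hB (pt_pos _), (basis_prod_spec hK hB _).1, mul_one]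

lemma qfun_expv (y : Fin r → ℝ) (j : Fin r) :
    expv hB ((qfun hK hB b y j : Qˣ) : Q) = expv hB ((b j : Q)) := by
  rw [qfun_val, expv_smul hK hB (pt_pos _), (basis_prod_spec hK hB _).2]

lemma qfun_equidim (y : Fin r → ℝ) (j : Fin r) :
    M.Equidim ((qfun hK hB b y j : Qˣ) : Q) ((b j : Q)) := by
  rw [equidim_iff hK hB]; exact qfun_expv hK hB b y j

variable (Ψ : (Fin m → Q) → (Fin r → Qˣ) → Q)

noncomputable def Ffun (x : Fin m → ℝ) (y : Fin r → ℝ) : ℝ :=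
  M.measure hB (Ψ (pfun hB dd x) (qfun hK hB b y))

lemma Ffun_pos (x : Fin m → ℝ) (y : Fin r → ℝ) : 0 < Ffun hK hB dd b Ψ x y :=
  measure_pos hK hB _

variable (d : Q)
variable (hΨ : ∀ (p : Fin m → Q) (q : Fin r → Qˣ),
      (∀ i, M.Equidim (p i) (dd i)) → (∀ j, M.Equidim ↑(q j) ↑(b j)) →
      M.Equidim (Ψ p q) d)
variable (ψ : (Fin m → ℝ) → (Fin r → ℝ) → ℝ)
variable (hψ : ∀ {nB : ℕ} {bb : Fin nB → Qˣ} (hb : M.IsBasis bb)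
        (p : Fin m → Q) (q : Fin r → Qˣ),
        (∀ i, M.Equidim (p i) (dd i)) → (∀ j, M.Equidim ↑(q j) ↑(b j)) →
        ψ (fun i => M.measure hb (p i)) (fun j => M.measure hb ↑(q j)) =
          M.measure hb (Ψ p q))

include hΨ hψ in
lemma FE (t : Fin n → ℝ) (x : Fin m → ℝ) (y : Fin r → ℝ)
    (hx : ∀ i, 0 < x i) (hy : ∀ j, 0 < y j) :
    Ffun hK hB dd b Ψ (fun i => x i * Real.exp (-(zdot (expv hB (dd i)) t)))
        (fun j => y j * Real.exp (-(zdot (expv hB ((b j : Q))) t)))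
      = Ffun hK hB dd b Ψ x y * Real.exp (-(zdot (expv hB d) t)) := by
  set x' : Fin m → ℝ := fun i => x i * Real.exp (-(zdot (expv hB (dd i)) t)) with hx'
  set y' : Fin r → ℝ := fun j => y j * Real.exp (-(zdot (expv hB ((b j : Q))) t)) with hy'
  have hx'p : ∀ i, 0 < x' i := fun i => mul_pos (hx i) (Real.exp_pos _)
  have hy'p : ∀ j, 0 < y' j := fun j => mul_pos (hy j) (Real.exp_pos _)
  have ha : ∀ l, 0 < Real.exp (t l) := fun l => Real.exp_pos _
  have hB' := rbasis_isBasis hK hB (fun l => Real.exp (t l)) ha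
  -- measures of pfun x, qfun y in the rescaled basis
  have hmp : ∀ i, M.measure hB' (pfun hB dd x i) = x' i := by
    intro i
    rw [rbasis_measure hK hB, pfun_measure hK hB, pfun_expv hK hB, exp_zdot, pt_eq (hx i)]
    show x i * (Real.exp (zdot (expv hB (dd i)) t))⁻¹
        = x i * Real.exp (-(zdot (expv hB (dd i)) t))
    rw [Real.exp_neg]
  have hmq : ∀ j, M.measure hB' ((qfun hK hB b y j : Qˣ) : Q) = y' j := by
    intro j
    rw [rbasis_measure hK hB, qfun_measure hK hB, qfun_expv hK hB, exp_zdot, pt_eq (hy j)]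
    show y j * (Real.exp (zdot (expv hB ((b j : Q))) t))⁻¹
        = y j * Real.exp (-(zdot (expv hB ((b j : Q))) t))
    rw [Real.exp_neg]
  -- covariance in the rescaled basis
  have h1 := hψ hB' (pfun hB dd x) (qfun hK hB b y)
    (pfun_equidim hK hB dd x) (qfun_equidim hK hB b y)
  -- covariance in the original basis applied to x' y'
  have h2 := hψ hB (pfun hB dd x') (qfun hK hB b y')
    (pfun_equidim hK hB dd x') (qfun_equidim hK hB b y')
  have hargs1 : (fun i => M.measure hB (pfun hB dd x' i)) = fun i => x' i := by
    funext i; rw [pfun_measure hK hB, pt_eq (hx'p i)]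
  have hargs2 : (fun j => M.measure hB ((qfun hK hB b y' j : Qˣ) : Q)) = fun j => y' j := by
    funext j; rw [qfun_measure hK hB, pt_eq (hy'p j)]
  have hargs3 : (fun i => M.measure hB' (pfun hB dd x i)) = fun i => x' i := funext hmp
  have hargs4 : (fun j => M.measure hB' ((qfun hK hB b y j : Qˣ) : Q)) = fun j => y' j :=
    funext hmq
  rw [hargs1, hargs2] at h2
  rw [hargs3, hargs4] at h1
  -- so Ffun x' y' = measure_{B'} (Ψ (pfun x) (qfun y))
  have key : Ffun hK hB dd b Ψ x' y' = M.measure hB' (Ψ (pfun hB dd x) (qfun hK hB b y)) := by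
    rw [Ffun, ← h1, ← h2]
  have hexp : expv hB (Ψ (pfun hB dd x) (qfun hK hB b y)) = expv hB d := by
    have := hΨ (pfun hB dd x) (qfun hK hB b y)
      (pfun_equidim hK hB dd x) (qfun_equidim hK hB b y)
    rwa [equidim_iff hK hB] at this
  rw [key, rbasis_measure hK hB, hexp, exp_zdot, ← Real.exp_neg]
  rfl

end Sec4

namespace LinAlg
open Sec4

lemma rat_clear {r : ℕ} (cq : Fin r → ℚ) :
    ∃ (k : ℕ) (kv : Fin r → ℤ), 0 < k ∧ ∀ j, (kv j : ℚ) = cq j * k := by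
  classical
  set K : ℕ := ∏ i, (cq i).den with hKdef
  refine ⟨K, fun j => (cq j).num * ((K / (cq j).den : ℕ) : ℤ), ?_, ?_⟩
  · exact Finset.prod_pos fun j _ => (cq j).pos
  · intro j
    have hdvd : (cq j).den ∣ K := Finset.dvd_prod_of_mem _ (Finset.mem_univ j)
    have hcanc : ((cq j).den : ℕ) * (K / (cq j).den) = K := Nat.mul_div_cancel' hdvd
    have h2 : ((cq j).den : ℚ) * ((K / (cq j).den : ℕ) : ℚ) = (K : ℚ) := by
      exact_mod_cast congrArg (Nat.cast (R := ℚ)) hcanc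
    have h3 : (((cq j).num * ((K / (cq j).den : ℕ) : ℤ) : ℤ) : ℚ)
        = ((cq j).num : ℚ) * ((K / (cq j).den : ℕ) : ℚ) := by
      rw [Int.cast_mul, Int.cast_natCast]
    rw [h3, ← Rat.mul_den_eq_num, mul_assoc, h2]

lemma cast_fun_sum_smul {n r : ℕ} (kv : Fin r → ℤ) (E : Fin r → Fin n → ℤ) (l : Fin n) :
    ((∑ j, kv j • E j) l : ℚ) = ∑ j, (kv j : ℚ) * (E j l : ℚ) := by
  have h : (∑ j, kv j • E j) l = ∑ j, kv j * E j l := by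
    rw [Finset.sum_apply]; exact Finset.sum_congr rfl fun j _ => rfl
  rw [h]; push_cast; rfl

lemma span_int {n r : ℕ} (E : Fin r → Fin n → ℤ) (D0 : Fin n → ℤ)
    (h : ∀ t : Fin n → ℝ, (∀ j, zdot (E j) t = 0) → zdot D0 t = 0) :
    ∃ (k : ℕ) (kv : Fin r → ℤ), 0 < k ∧ (k : ℤ) • D0 = ∑ j, kv j • E j := by
  classical
  set Eq : Fin r → (Fin n → ℚ) := fun j l => (E j l : ℚ) with hEq
  set D0q : Fin n → ℚ := fun l => (D0 l : ℚ) with hD0q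
  -- D0q is in the rational span of the Eq
  have hmem : D0q ∈ Submodule.span ℚ (Set.range Eq) := by
    by_contra hno
    set p := Submodule.span ℚ (Set.range Eq) with hp
    have hq0 : (Submodule.Quotient.mk D0q : (Fin n → ℚ) ⧸ p) ≠ 0 := by
      simpa [Submodule.Quotient.mk_eq_zero] using hno
    obtain ⟨φ, hφ⟩ : ∃ φ : Module.Dual ℚ ((Fin n → ℚ) ⧸ p),
        φ (Submodule.Quotient.mk D0q) ≠ 0 := by
      by_contra hall
      push_neg at hall
      exact hq0 ((Module.forall_dual_apply_eq_zero_iff ℚ _).1 hall)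
    set f : (Fin n → ℚ) →ₗ[ℚ] ℚ := φ.comp p.mkQ with hf
    have hfE : ∀ j, f (Eq j) = 0 := by
      intro j
      have : Eq j ∈ p := Submodule.subset_span ⟨j, rfl⟩
      simp [hf, (Submodule.Quotient.mk_eq_zero p).2 this]
    have hfD : f D0q ≠ 0 := hφ
    -- transfer to a real annihilating vector
    set t : Fin n → ℝ := fun l => ((f fun jj => if l = jj then 1 else 0 : ℚ) : ℝ) with ht
    have hdot : ∀ v : Fin n → ℤ, zdot v t = ((f fun l => (v l : ℚ)) : ℝ) := by
      intro v
      rw [LinearMap.pi_apply_eq_sum_univ f (fun l => (v l : ℚ))]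
      rw [zdot]
      simp only [smul_eq_mul]
      push_cast
      rfl
    have h1 : ∀ j, zdot (E j) t = 0 := by
      intro j; rw [hdot (E j)]
      have : (fun l => ((E j l : ℚ))) = Eq j := rfl
      rw [this, hfE j]; norm_num
    have h2 := h t h1
    rw [hdot D0] at h2
    have : f D0q = 0 := by exact_mod_cast h2
    exact hfD this
  obtain ⟨cq, hcq⟩ := (Submodule.mem_span_range_iff_exists_fun ℚ).1 hmem
  obtain ⟨k, kv, hk, hkv⟩ := rat_clear cq
  refine ⟨k, kv, hk, ?_⟩
  funext l
  have : ((k : ℤ) • D0) l = (k : ℤ) * D0 l := rfl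
  rw [this]
  have hcast : ((∑ j, kv j • E j) l : ℚ) = ((k : ℤ) * D0 l : ℚ) := by
    rw [cast_fun_sum_smul]
    have : ∑ j, (kv j : ℚ) * (E j l : ℚ) = (k : ℚ) * ∑ j, cq j * Eq j l := by
      rw [Finset.mul_sum]
      exact Finset.sum_congr rfl fun j _ => by rw [hkv j]; ring
    rw [this]
    have hl := congrFun hcq l
    have : (∑ j, cq j • Eq j) l = ∑ j, cq j * Eq j l := by
      rw [Finset.sum_apply]; rfl
    rw [this] at hl
    rw [hl]
    push_cast
    rfl
  exact_mod_cast hcast.symm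

lemma left_inv {n r : ℕ} (E : Fin r → Fin n → ℤ)
    (hInd : ∀ kv : Fin r → ℤ, ∑ j, kv j • E j = 0 → kv = 0) :
    ∀ w : Fin r → ℝ, ∃ t : Fin n → ℝ, ∀ j, zdot (E j) t = w j := by
  classical
  set Eq : Fin r → (Fin n → ℚ) := fun j l => (E j l : ℚ) with hEq
  set S : (Fin r → ℚ) →ₗ[ℚ] (Fin n → ℚ) := Fintype.linearCombination ℚ Eq with hS
  have hSapp : ∀ c, S c = ∑ j, c j • Eq j := fun c => by
    rw [hS, Fintype.linearCombination_apply]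
  have hker : LinearMap.ker S = ⊥ := by
    rw [LinearMap.ker_eq_bot']
    intro c hc
    rw [hSapp] at hc
    obtain ⟨k, kv, hk, hkv⟩ := rat_clear c
    have hsum : ∑ j, kv j • E j = 0 := by
      funext l
      have : ((∑ j, kv j • E j) l : ℚ) = 0 := by
        rw [cast_fun_sum_smul]
        have : ∑ j, (kv j : ℚ) * (E j l : ℚ) = (k : ℚ) * ∑ j, c j * Eq j l := by
          rw [Finset.mul_sum]
          exact Finset.sum_congr rfl fun j _ => by rw [hkv j]; ring
        rw [this]
        have hl := congrFun hc l
        have h2 : (∑ j, c j • Eq j) l = ∑ j, c j * Eq j l := by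
          rw [Finset.sum_apply]; rfl
        rw [h2] at hl
        rw [hl]
        simp
      exact_mod_cast this
    have := hInd kv hsum
    funext j
    have h0 : (kv j : ℚ) = 0 := by rw [this]; simp
    rw [hkv j] at h0
    have : (k : ℚ) ≠ 0 := by positivity
    exact (mul_eq_zero.1 h0).resolve_right this
  obtain ⟨L, hL⟩ := LinearMap.exists_leftInverse_of_injective S hker
  have hLE : ∀ j, L (Eq j) = Pi.single j 1 := by
    intro j
    have h1 : S (Pi.single j 1) = Eq j := by
      rw [hSapp]
      rw [Finset.sum_eq_single j]
      · simp
      · intro jj _ hjj; rw [Pi.single_eq_of_ne hjj]; simp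
      · intro hj; exact absurd (Finset.mem_univ j) hj
    have := congrArg L h1.symm
    rwa [← LinearMap.comp_apply, hL, LinearMap.id_apply] at this
  intro w
  set g : Fin r → Fin n → ℚ := fun j l => L (fun jj => if l = jj then 1 else 0) j with hg
  have hrow : ∀ j' j, ∑ l, Eq j' l * g j l = if j = j' then 1 else 0 := by
    intro j' j
    have h1 := congrFun (hLE j') j
    rw [LinearMap.pi_apply_eq_sum_univ L (Eq j')] at h1
    have h2 : (∑ l, Eq j' l • L (fun jj => if l = jj then 1 else 0)) j
        = ∑ l, Eq j' l * g j l := by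
      rw [Finset.sum_apply]
      exact Finset.sum_congr rfl fun l _ => rfl
    rw [h2] at h1
    rw [h1]
    by_cases hjj : j = j'
    · subst hjj; simp
    · rw [Pi.single_eq_of_ne hjj]; simp [hjj]
  refine ⟨fun l => ∑ j, (g j l : ℝ) * w j, ?_⟩
  intro j'
  rw [zdot]
  have : ∀ l, (E j' l : ℝ) * (∑ j, (g j l : ℝ) * w j) = ∑ j, ((Eq j' l * g j l : ℚ) : ℝ) * w j := by
    intro l
    rw [Finset.mul_sum]
    exact Finset.sum_congr rfl fun j _ => by push_cast [hEq]; ring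
  rw [Finset.sum_congr rfl fun l _ => this l, Finset.sum_comm]
  have : ∀ j, ∑ l, ((Eq j' l * g j l : ℚ) : ℝ) * w j = (if j = j' then (1:ℝ) else 0) * w j := by
    intro j
    rw [← Finset.sum_mul]
    congr 1
    rw [show (if j = j' then (1:ℝ) else 0) = ((if j = j' then (1:ℚ) else 0 : ℚ) : ℝ) by
      split <;> simp, ← hrow j' j]
    push_cast
    rfl
  rw [Finset.sum_congr rfl fun j _ => this j]
  simp

end LinAlg

namespace Mini
open Sec4

lemma zdot_zsmul {n : ℕ} (z : ℤ) (v : Fin n → ℤ) (t : Fin n → ℝ) :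
    zdot (z • v) t = z * zdot v t := by
  simp only [zdot, Finset.mul_sum]
  refine Finset.sum_congr rfl fun l _ => ?_
  have : (z • v) l = z * v l := rfl
  rw [this]
  push_cast
  ring

lemma zdot_sum {n : ℕ} {ι : Type*} (s : Finset ι) (f : ι → Fin n → ℤ) (t : Fin n → ℝ) :
    zdot (∑ j ∈ s, f j) t = ∑ j ∈ s, zdot (f j) t := by
  simp only [zdot]
  have h : ∀ l, ((∑ j ∈ s, f j) l : ℝ) * t l = ∑ j ∈ s, (f j l : ℝ) * t l := by
    intro l
    rw [Finset.sum_apply]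
    push_cast
    rw [Finset.sum_mul]
  rw [Finset.sum_congr rfl fun l _ => h l, Finset.sum_comm]

lemma pow_inj {a b : ℝ} (ha : 0 ≤ a) (hb : 0 ≤ b) {n : ℕ} (hn : n ≠ 0)
    (h : a ^ n = b ^ n) : a = b := by
  rcases lt_trichotomy a b with hlt | he | hgt
  · exact absurd h (pow_lt_pow_left₀ hlt ha hn).ne
  · exact he
  · exact absurd h.symm (pow_lt_pow_left₀ hgt hb hn).ne

lemma exp_zlog {a : ℝ} (ha : 0 < a) (z : ℤ) : Real.exp (z * Real.log a) = a ^ z := by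
  rw [← Real.rpow_intCast a z, Real.rpow_def_of_pos ha, mul_comm]

end Mini

open PiAux Sec2 Sec3 Sec4 LinAlg Mini in
theorem pi_theorem {Q : Type*} [CommMonoid Q]
    (M : ScalableMonoid ℝ Q) (hK : M.K = {x : ℝ | 0 < x})
    (hQS : M.IsQuantitySpace)
    {m r : ℕ} (d : Q) (dd : Fin m → Q) (b : Fin r → Qˣ)
    (hb : ∀ lam : ℝ, lam ∈ M.K → ∀ kv : Fin r → ℤ,
      M.smul lam (↑(∏ j, b j ^ kv j) : Q) = 1 → kv = 0)
    (hdd : ∀ i, ∃ (ci : ℕ) (cij : Fin r → ℤ), 0 < ci ∧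
      M.Equidim (dd i ^ ci) (↑(∏ j, b j ^ cij j) : Q))
    (Ψ : (Fin m → Q) → (Fin r → Qˣ) → Q)
    (hΨ : ∀ (p : Fin m → Q) (q : Fin r → Qˣ),
      (∀ i, M.Equidim (p i) (dd i)) → (∀ j, M.Equidim ↑(q j) ↑(b j)) →
      M.Equidim (Ψ p q) d)
    (hcov : ∃ ψ : (Fin m → ℝ) → (Fin r → ℝ) → ℝ,
      ∀ {nB : ℕ} {bB : Fin nB → Qˣ} (hB : M.IsBasis bB)
        (p : Fin m → Q) (q : Fin r → Qˣ),
        (∀ i, M.Equidim (p i) (dd i)) → (∀ j, M.Equidim ↑(q j) ↑(b j)) →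
        ψ (fun i => M.measure hB (p i)) (fun j => M.measure hB ↑(q j)) =
          M.measure hB (Ψ p q)) :
    ∃ (k : ℕ) (kv : Fin r → ℤ) (c : Fin m → ℕ) (cc : Fin m → Fin r → ℤ),
      0 < k ∧
      M.Equidim (d ^ k) (↑(∏ j, b j ^ kv j) : Q) ∧
      (∀ i, 0 < c i) ∧
      (∀ i, M.Equidim (dd i ^ c i) (↑(∏ j, b j ^ cc i j) : Q)) ∧
      ∃ Φ : (Fin m → Q) → Q,
        (∀ Pi : Fin m → Q, (∀ i, M.Equidim (Pi i) 1) → M.Equidim (Φ Pi) 1) ∧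
        ∀ (p : Fin m → Q) (q : Fin r → Qˣ),
          (∀ i, M.Equidim (p i) (dd i)) → (∀ j, M.Equidim ↑(q j) ↑(b j)) →
          (Ψ p q) ^ k =
            (↑(∏ j, q j ^ kv j) : Q) *
              Φ (fun i => p i ^ c i * (↑((∏ j, q j ^ cc i j)⁻¹) : Q)) := by
  classical
  obtain ⟨ψ, hψ⟩ := hcov
  obtain ⟨n, bB, hB⟩ := hQS
  choose c cc hc hrel using hdd
  set Dv : Fin m → Fin n → ℤ := fun i => expv hB (dd i) with hDv
  set Ev : Fin r → Fin n → ℤ := fun j => expv hB ((b j : Q)) with hEv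
  set D0 : Fin n → ℤ := expv hB d with hD0
  -- integer relations from hrel
  have hrelz : ∀ i, (c i : ℤ) • Dv i = ∑ j, cc i j • Ev j := by
    intro i
    have h1 := (equidim_iff hK hB _ _).1 (hrel i)
    rw [expv_pow hK hB, expv_unit_prod hK hB] at h1
    rw [← h1, natCast_zsmul]
  -- independence of the Ev
  have hInd : ∀ kv : Fin r → ℤ, ∑ j, kv j • Ev j = 0 → kv = 0 := by
    intro kv hsum
    have hexp : expv hB (↑(∏ j, b j ^ kv j) : Q) = 0 := by
      rw [expv_unit_prod hK hB, hsum]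
    set μ0 := M.measure hB (↑(∏ j, b j ^ kv j) : Q) with hμ0
    have hμ0p : 0 < μ0 := measure_pos hK hB _
    have hone : (↑(∏ l, bB l ^ expv hB (↑(∏ j, b j ^ kv j) : Q) l) : Q) = 1 := by
      rw [hexp]
      simp
    have hu : (↑(∏ j, b j ^ kv j) : Q) = M.smul μ0 1 := by
      conv_lhs => rw [expand hB (↑(∏ j, b j ^ kv j) : Q)]
      rw [hone]
    have : M.smul μ0⁻¹ (↑(∏ j, b j ^ kv j) : Q) = 1 := by
      rw [hu, smul_cancel hK hμ0p]
    exact hb μ0⁻¹ (mem_of_pos hK (by positivity)) kv this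
  -- The annihilator property for D0, via the functional equation
  have hann : ∀ t : Fin n → ℝ, (∀ j, zdot (Ev j) t = 0) → zdot D0 t = 0 := by
    intro t ht
    have hDi : ∀ i, zdot (Dv i) t = 0 := by
      intro i
      have h1 := congrArg (fun v => zdot v t) (hrelz i)
      simp only [zdot_zsmul, zdot_sum] at h1
      have h2 : ∑ j, ((cc i j : ℝ)) * zdot (Ev j) t = 0 :=
        Finset.sum_eq_zero fun j _ => by rw [ht j, mul_zero]
      rw [h2] at h1
      have hc0 : ((c i : ℤ) : ℝ) ≠ 0 := by
        exact_mod_cast Nat.cast_ne_zero.2 (hc i).ne'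
      exact (mul_eq_zero.1 h1).resolve_left hc0
    have hFE := FE hK hB dd b Ψ d hΨ ψ hψ t (fun _ => 1) (fun _ => 1)
      (fun _ => one_pos) (fun _ => one_pos)
    have hx1 : (fun i => (1:ℝ) * Real.exp (-(zdot (expv hB (dd i)) t))) = fun _ => (1:ℝ) := by
      funext i
      rw [show expv hB (dd i) = Dv i from rfl, hDi i, neg_zero, Real.exp_zero, mul_one]
    have hy1 : (fun j => (1:ℝ) * Real.exp (-(zdot (expv hB ((b j : Q))) t))) = fun _ => (1:ℝ) := by
      funext j
      rw [show expv hB ((b j : Q)) = Ev j from rfl, ht j, neg_zero, Real.exp_zero, mul_one]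
    rw [hx1, hy1] at hFE
    have hpos := Ffun_pos hK hB dd b Ψ (fun _ => (1:ℝ)) (fun _ => (1:ℝ))
    have hone : Real.exp (-(zdot (expv hB d) t)) = 1 := by
      have h3 : Ffun hK hB dd b Ψ (fun _ => (1:ℝ)) (fun _ => (1:ℝ)) * 1
          = Ffun hK hB dd b Ψ (fun _ => (1:ℝ)) (fun _ => (1:ℝ))
            * Real.exp (-(zdot (expv hB d) t)) := by rw [mul_one]; exact hFE
      exact (mul_left_cancel₀ hpos.ne' h3).symm
    have h4 := (Real.exp_eq_one_iff _).1 hone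
    rw [← hD0] at h4
    linarith [h4]
  obtain ⟨k, kv, hk, hkD⟩ := span_int Ev D0 hann
  -- the invariance property of Ffun
  have hinv : ∀ (x : Fin m → ℝ) (y : Fin r → ℝ) (x' : Fin m → ℝ) (y' : Fin r → ℝ),
      (∀ i, 0 < x i) → (∀ j, 0 < y j) → (∀ i, 0 < x' i) → (∀ j, 0 < y' j) →
      (∀ i, x i ^ c i * (∏ j, y j ^ cc i j)⁻¹ = x' i ^ c i * (∏ j, y' j ^ cc i j)⁻¹) →
      Ffun hK hB dd b Ψ x y ^ k * (∏ j, y j ^ kv j)⁻¹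
        = Ffun hK hB dd b Ψ x' y' ^ k * (∏ j, y' j ^ kv j)⁻¹ := by
    intro x y x' y' hx hy hx' hy' hpi
    obtain ⟨t, htE⟩ := left_inv Ev hInd (fun j => Real.log (y j) - Real.log (y' j))
    have hyy : ∀ j, y j * Real.exp (-(zdot (Ev j) t)) = y' j := by
      intro j
      rw [htE j, neg_sub, Real.exp_sub, Real.exp_log (hy' j), Real.exp_log (hy j),
        mul_comm, div_mul_cancel₀ _ (hy j).ne']
    have hquot : ∀ (v : Fin r → ℤ), Real.exp (-(zdot (∑ j, v j • Ev j) t))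
        = ∏ j, (y' j / y j) ^ v j := by
      intro v
      rw [zdot_sum, ← Finset.sum_neg_distrib]
      rw [Real.exp_sum]
      refine Finset.prod_congr rfl fun j _ => ?_
      rw [zdot_zsmul, htE j, ← exp_zlog (div_pos (hy' j) (hy j)) (v j)]
      rw [Real.log_div (hy' j).ne' (hy j).ne']
      ring_nf
    have hxx : ∀ i, x i * Real.exp (-(zdot (Dv i) t)) = x' i := by
      intro i
      have hn : c i ≠ 0 := (hc i).ne'
      have hbase : 0 ≤ x i * Real.exp (-(zdot (Dv i) t)) :=
        (mul_pos (hx i) (Real.exp_pos _)).le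
      refine pow_inj hbase (hx' i).le hn ?_
      rw [mul_pow, ← Real.exp_nat_mul]
      have hcz : (c i : ℝ) * (-(zdot (Dv i) t)) = -(zdot ((c i : ℤ) • Dv i) t) := by
        rw [zdot_zsmul]; push_cast; ring
      rw [hcz, hrelz i, hquot (cc i)]
      have hprod : ∏ j, (y' j / y j) ^ cc i j
          = (∏ j, y' j ^ cc i j) * (∏ j, y j ^ cc i j)⁻¹ := by
        rw [← Finset.prod_inv_distrib, ← Finset.prod_mul_distrib]
        exact Finset.prod_congr rfl fun j _ => by rw [div_zpow, div_eq_mul_inv]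
      rw [hprod]
      have hyne : (∏ j, y j ^ cc i j) ≠ 0 :=
        (Finset.prod_pos fun j _ => zpow_pos (hy j) _).ne'
      have hy'ne : (∏ j, y' j ^ cc i j) ≠ 0 :=
        (Finset.prod_pos fun j _ => zpow_pos (hy' j) _).ne'
      have := hpi i
      field_simp at this ⊢
      linarith [this]
    have hFE := FE hK hB dd b Ψ d hΨ ψ hψ t x y hx hy
    have hxfun : (fun i => x i * Real.exp (-(zdot (expv hB (dd i)) t))) = x' := funext hxx
    have hyfun : (fun j => y j * Real.exp (-(zdot (expv hB ((b j : Q))) t))) = y' := funext hyy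
    rw [hxfun, hyfun] at hFE
    rw [hFE, mul_pow, ← Real.exp_nat_mul]
    have hkz : (k : ℝ) * (-(zdot (expv hB d) t)) = -(zdot ((k : ℤ) • D0) t) := by
      rw [zdot_zsmul, ← hD0]; push_cast; ring
    rw [hkz, hkD, hquot kv]
    have hprod : ∏ j, (y' j / y j) ^ kv j
        = (∏ j, y' j ^ kv j) * (∏ j, y j ^ kv j)⁻¹ := by
      rw [← Finset.prod_inv_distrib, ← Finset.prod_mul_distrib]
      exact Finset.prod_congr rfl fun j _ => by rw [div_zpow, div_eq_mul_inv]
    rw [hprod]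
    have hyne : (∏ j, y j ^ kv j) ≠ 0 :=
      (Finset.prod_pos fun j _ => zpow_pos (hy j) _).ne'
    have hy'ne : (∏ j, y' j ^ kv j) ≠ 0 :=
      (Finset.prod_pos fun j _ => zpow_pos (hy' j) _).ne'
    field_simp
  -- the quasiscalar function Φ
  set Φ : (Fin m → Q) → Q := fun Pi => M.smul
    (Ffun hK hB dd b Ψ (fun i => (M.measure hB (Pi i)) ^ ((c i : ℝ))⁻¹) (fun _ => 1) ^ k) 1
    with hΦ
  refine ⟨k, kv, c, cc, hk, ?_, hc, hrel, Φ, ?_, ?_⟩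
  · -- d ^ k ~ ∏ b ^ kv
    rw [equidim_iff hK hB, expv_pow hK hB, expv_unit_prod hK hB, ← hkD, natCast_zsmul]
  · -- Φ is quasiscalar-valued
    intro Pi _
    refine ⟨1, Ffun hK hB dd b Ψ (fun i => (M.measure hB (Pi i)) ^ ((c i : ℝ))⁻¹)
        (fun _ => 1) ^ k, M.one_mem, mem_of_pos hK (pow_pos (Ffun_pos hK hB dd b Ψ _ _) k), ?_⟩
    rw [hΦ]
    exact M.smul_one _
  · -- the main identity
    intro p q hp hq
    set x : Fin m → ℝ := fun i => M.measure hB (p i) with hx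
    set y : Fin r → ℝ := fun j => M.measure hB ((q j : Q)) with hy
    have hxp : ∀ i, 0 < x i := fun i => measure_pos hK hB _
    have hyp : ∀ j, 0 < y j := fun j => measure_pos hK hB _
    have hpx : p = pfun hB dd x := by
      funext i
      rw [pfun]
      have he : expv hB (p i) = expv hB (dd i) := (equidim_iff hK hB _ _).1 (hp i)
      rw [pt_eq (hxp i), ← he]
      exact expand hB (p i)
    have hqy : q = qfun hK hB b y := by
      funext j
      apply Units.ext
      rw [qfun_val hK hB]
      have he : expv hB ((q j : Q)) = expv hB ((b j : Q)) := (equidim_iff hK hB _ _).1 (hq j)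
      rw [pt_eq (hyp j), ← he]
      exact expand hB ((q j : Q))
    have hΨval : Ψ p q = Ψ (pfun hB dd x) (qfun hK hB b y) := by rw [← hpx, ← hqy]
    have hμΨ : M.measure hB (Ψ p q) = Ffun hK hB dd b Ψ x y := by
      rw [hΨval]; rfl
    have heΨ : expv hB (Ψ p q) = D0 := (equidim_iff hK hB _ _).1 (hΨ p q hp hq)
    -- measures of the Π quantities
    have hπ : ∀ i, M.measure hB (p i ^ c i * (↑((∏ j, q j ^ cc i j)⁻¹) : Q))
        = x i ^ c i * (∏ j, y j ^ cc i j)⁻¹ := by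
      intro i
      rw [measure_mul hK hB, measure_pow hK hB, measure_unit_inv hK hB,
        measure_unit_prod hK hB]
    have hπpos : ∀ i, 0 < x i ^ c i * (∏ j, y j ^ cc i j)⁻¹ := by
      intro i
      have h5 : (0:ℝ) < ∏ j, y j ^ cc i j := Finset.prod_pos fun j _ => zpow_pos (hyp j) _
      exact mul_pos (pow_pos (hxp i) _) (inv_pos.2 h5)
    set x' : Fin m → ℝ := fun i => (x i ^ c i * (∏ j, y j ^ cc i j)⁻¹) ^ ((c i : ℝ))⁻¹
      with hx'
    have hx'p : ∀ i, 0 < x' i := fun i => Real.rpow_pos_of_pos (hπpos i) _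
    have hinv1 := hinv x y x' (fun _ => 1) hxp hyp hx'p (fun _ => one_pos) ?_
    swap
    · intro i
      simp only [one_zpow, Finset.prod_const_one, inv_one, mul_one]
      rw [hx']
      rw [← Real.rpow_natCast ((x i ^ c i * (∏ j, y j ^ cc i j)⁻¹) ^ ((c i : ℝ))⁻¹) (c i),
        ← Real.rpow_mul (hπpos i).le, inv_mul_cancel₀ (by exact_mod_cast (hc i).ne' :
          ((c i : ℝ)) ≠ 0), Real.rpow_one]
    -- assemble the equation via uniqueness of expansion
    apply eq_of_measure_expv hB
    · -- equality of measures
      rw [measure_pow hK hB, hμΨ, measure_mul hK hB, measure_unit_prod hK hB]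
      have hμΦ : M.measure hB (Φ fun i => p i ^ c i * (↑((∏ j, q j ^ cc i j)⁻¹) : Q))
          = Ffun hK hB dd b Ψ x' (fun _ => 1) ^ k := by
        rw [hΦ]
        have hFp : (0:ℝ) < Ffun hK hB dd b Ψ
            (fun i => (M.measure hB (p i ^ c i * (↑((∏ j, q j ^ cc i j)⁻¹) : Q))) ^ ((c i : ℝ))⁻¹)
            (fun _ => 1) ^ k := pow_pos (Ffun_pos hK hB dd b Ψ _ _) k
        rw [measure_smul hK hB (pow_pos (Ffun_pos hK hB dd b Ψ _ _) k), measure_one hK hB, mul_one]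
        congr 1
        congr 1
        funext i
        rw [hπ i]
      rw [hμΦ]
      simp only [one_zpow, Finset.prod_const_one, inv_one, mul_one] at hinv1
      have hyne : (∏ j, y j ^ kv j) ≠ 0 :=
        (Finset.prod_pos fun j _ => zpow_pos (hyp j) _).ne'
      have hmy : ∀ j, M.measure hB ((q j : Q)) = y j := fun j => rfl
      rw [Finset.prod_congr rfl fun j _ => by rw [hmy j]]
      field_simp at hinv1 ⊢
      linarith [hinv1]
    · -- equality of exponent vectors
      rw [expv_pow hK hB, heΨ, expv_mul hK hB, expv_unit_prod hK hB]
      have heΦ : expv hB (Φ fun i => p i ^ c i * (↑((∏ j, q j ^ cc i j)⁻¹) : Q)) = 0 := by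
        rw [hΦ, expv_smul hK hB (pow_pos (Ffun_pos hK hB dd b Ψ _ _) k), expv_one hK hB]
      rw [heΦ, add_zero]
      have heq : ∀ j, expv hB ((q j : Q)) = Ev j :=
        fun j => (equidim_iff hK hB _ _).1 (hq j)
      rw [Finset.sum_congr rfl fun j _ => by rw [heq j], ← hkD, natCast_zsmul]
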